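/- Let γ > 0 and, for α ∈ (0,1), let q(α) = α^{−γ} · ( (1/α) log(1/(1−α)) )^{−γ} (the quantile function of order 1−α of the Fréchet distribution with tail index γ). Then the function Δ(α) := γ + α (log q)'(α) satisfies Δ(α) = −(γ/2) α (1 + O(α)) as α → 0; in particular Δ(α)/α → −γ/2 as α → 0. -/

import Mathlib

open Filter Set

/-- Taylor estimate for `L(α) = -log(1-α)` on `(0, 1/2)`. -/
lemma taylor_L {α : ℝ} (h0 : 0 < α) (h1 : α < 1/2) :
    |(-Real.log (1 - α)) - (α + α^2/2)| ≤ 2 * α^3 := by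
  have habs : |α| < 1 := by rw [abs_of_pos h0]; linarith
  have := Real.abs_log_sub_add_sum_range_le habs 2
  have hsum : (∑ i ∈ Finset.range 2, α ^ (i + 1) / (i + 1)) = α + α^2/2 := by
    simp [Finset.sum_range_succ]; ring
  rw [hsum, abs_of_pos h0] at this
  norm_num at this
  have h2 : α^3 / (1 - α) ≤ 2 * α^3 := by
    rw [div_le_iff₀ (by linarith)]
    nlinarith [mul_nonneg (pow_pos h0 3).le (by linarith : (0:ℝ) ≤ 1 - 2*α)]
  calc |(-Real.log (1 - α)) - (α + α^2/2)|
      = |(α + α^2/2) + Real.log (1 - α)| := by rw [← abs_neg]; ring_nf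
    _ ≤ α^3 / (1 - α) := this
    _ ≤ 2 * α^3 := h2

/-- For the Fréchet quantile function
`q(α) = α^{-γ} ((1/α) log(1/(1-α)))^{-γ}` with tail index `γ > 0`, the function
`Δ(α) := γ + α (log q)'(α)` satisfies `Δ(α) = -(γ/2) α (1 + O(α))` as `α → 0⁺`;
in particular `Δ(α)/α → -γ/2` as `α → 0⁺`. -/
theorem frechet_Delta_asymptotics
    (γ : ℝ) (hγ : 0 < γ)
    (q : ℝ → ℝ)
    (hqdef : ∀ α ∈ Set.Ioo (0:ℝ) 1,
      q α = α ^ (-γ) * ((1 / α) * Real.log (1 / (1 - α))) ^ (-γ))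
    (Δ : ℝ → ℝ)
    (hΔdef : ∀ α ∈ Set.Ioo (0:ℝ) 1,
      Δ α = γ + α * deriv (fun a => Real.log (q a)) α) :
    (∃ C > (0:ℝ), ∃ α₀ > (0:ℝ), ∀ α : ℝ, 0 < α → α < α₀ →
        |Δ α + (γ / 2) * α| ≤ C * α ^ 2) ∧
      Tendsto (fun α => Δ α / α) (nhdsWithin 0 (Set.Ioi 0)) (nhds (-(γ / 2))) := by
  -- Basic facts about L a = -log(1-a) for a ∈ (0,1)
  have hLpos : ∀ a ∈ Set.Ioo (0:ℝ) 1, 0 < -Real.log (1 - a) := by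
    intro a ha
    have : Real.log (1 - a) < 0 :=
      Real.log_neg (by linarith [ha.2]) (by linarith [ha.1])
    linarith
  -- log (q a) = -γ * log (-log (1-a)) on (0,1)
  have hlogq : ∀ a ∈ Set.Ioo (0:ℝ) 1,
      Real.log (q a) = -γ * Real.log (-Real.log (1 - a)) := by
    intro a ha
    have ha0 : (0:ℝ) < a := ha.1
    have hL : 0 < -Real.log (1 - a) := hLpos a ha
    have hlog1d : Real.log (1 / (1 - a)) = -Real.log (1 - a) := by
      rw [one_div, Real.log_inv]
    rw [hqdef a ha, hlog1d]
    have hfac : (0:ℝ) < (1 / a) * (-Real.log (1 - a)) := by positivity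
    rw [← Real.mul_rpow ha0.le hfac.le]
    have : a * ((1 / a) * (-Real.log (1 - a))) = -Real.log (1 - a) := by
      field_simp
    rw [this, Real.log_rpow hL]
  -- key formula for Δ on (0,1)
  have key : ∀ a ∈ Set.Ioo (0:ℝ) 1,
      Δ a = γ - γ * a / ((1 - a) * (-Real.log (1 - a))) := by
    intro a ha
    have ha1 : (1:ℝ) - a ≠ 0 := by have := ha.2; intro h; nlinarith [ha.1]
    have hL : 0 < -Real.log (1 - a) := hLpos a ha
    have hLne : -Real.log (1 - a) ≠ 0 := ne_of_gt hL
    -- derivative equality by eventual equality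
    have hev : (fun x => Real.log (q x))
        =ᶠ[nhds a] (fun x => -γ * Real.log (-Real.log (1 - x))) := by
      filter_upwards [isOpen_Ioo.mem_nhds ha] with x hx
      exact hlogq x hx
    have hd1 : HasDerivAt (fun x : ℝ => 1 - x) (-1) a :=
      (hasDerivAt_id a).const_sub 1
    have hd2 : HasDerivAt (fun x : ℝ => Real.log (1 - x)) ((1 - a)⁻¹ * (-1)) a :=
      (Real.hasDerivAt_log ha1).comp a hd1
    have hd3 : HasDerivAt (fun x : ℝ => -Real.log (1 - x)) (-((1 - a)⁻¹ * (-1))) a :=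
      hd2.neg
    have hd4 : HasDerivAt (fun x : ℝ => Real.log (-Real.log (1 - x)))
        ((-Real.log (1 - a))⁻¹ * -((1 - a)⁻¹ * (-1))) a := by
      have hlogL : Real.log (1 - a) ≠ 0 := by
        intro h
        rw [h] at hLne; simp at hLne
      exact (Real.hasDerivAt_log (by simpa using hLne)).comp a hd3
    have hd5 : HasDerivAt (fun x : ℝ => -γ * Real.log (-Real.log (1 - x)))
        (-γ * ((-Real.log (1 - a))⁻¹ * -((1 - a)⁻¹ * (-1)))) a := hd4.const_mul (-γ)
    have hderiv : deriv (fun x => Real.log (q x)) a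
        = -γ * ((-Real.log (1 - a))⁻¹ * -((1 - a)⁻¹ * (-1))) := by
      rw [hev.deriv_eq, hd5.deriv]
    rw [hΔdef a ha, hderiv, div_eq_mul_inv, mul_inv]
    ring
  -- main estimate
  have est : ∀ α : ℝ, 0 < α → α < 1/2 → |Δ α + (γ / 2) * α| ≤ (6 * γ) * α ^ 2 := by
    intro α h0 h1
    have hmem : α ∈ Set.Ioo (0:ℝ) 1 := ⟨h0, by linarith⟩
    set L : ℝ := -Real.log (1 - α) with hLdef
    have hL : 0 < L := hLpos α hmem
    have hE : |L - (α + α^2/2)| ≤ 2 * α^3 := taylor_L h0 h1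
    -- lower bound for L: L ≥ α
    have hLge : α ≤ L := by
      have := Real.log_le_sub_one_of_pos (x := 1 - α) (by linarith)
      simp only [hLdef]; linarith
    have hDpos : 0 < (1 - α) * L := by
      apply mul_pos (by linarith) hL
    have hDge : α / 2 ≤ (1 - α) * L := by
      nlinarith
    -- rewrite Δ α + (γ/2) α
    have hΔ : Δ α = γ - γ * α / ((1 - α) * L) := key α hmem
    have hform : Δ α + (γ / 2) * α
        = γ * ((2 + α) * (1 - α) * L - 2 * α) / (2 * ((1 - α) * L)) := by
      rw [hΔ]
      field_simp [hL.ne', (by linarith : (1:ℝ) - α ≠ 0)]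
      ring
    set N : ℝ := (2 + α) * (1 - α) * L - 2 * α with hNdef
    have hNbound : |N| ≤ 6 * α^3 := by
      have hEabs : -(2*α^3) ≤ L - (α + α^2/2) ∧ L - (α + α^2/2) ≤ 2*α^3 :=
        abs_le.mp hE
      have h1' := hEabs.1
      have h2' := hEabs.2
      rw [abs_le]
      constructor <;> nlinarith [sq_nonneg α, pow_pos h0 3]
    rw [hform, abs_div, abs_mul, abs_of_pos hγ,
      abs_of_pos (by linarith : (0:ℝ) < 2 * ((1 - α) * L))]
    rw [div_le_iff₀ (by linarith)]
    calc γ * |N| ≤ γ * (6 * α^3) := by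
          exact mul_le_mul_of_nonneg_left hNbound hγ.le
      _ = 12 * γ * α ^ 2 * (α / 2) := by ring
      _ ≤ 12 * γ * α ^ 2 * ((1 - α) * L) :=
          mul_le_mul_of_nonneg_left hDge (by positivity)
      _ = 6 * γ * α ^ 2 * (2 * ((1 - α) * L)) := by ring
  refine ⟨⟨6 * γ, by positivity, 1/2, by norm_num, fun α h0 h1 => est α h0 h1⟩, ?_⟩
  -- tendsto part
  rw [← tendsto_sub_nhds_zero_iff]
  apply squeeze_zero_norm' (a := fun α => 6 * γ * α)
  · filter_upwards [Ioo_mem_nhdsGT_of_mem (by norm_num : (0:ℝ) ∈ Set.Ico (0:ℝ) (1/2))]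
      with α hα
    have h0 : 0 < α := hα.1
    have h1 : α < 1/2 := hα.2
    have := est α h0 h1
    have heq : Δ α / α - -(γ / 2) = (Δ α + (γ / 2) * α) / α := by
      field_simp; ring
    rw [Real.norm_eq_abs, heq, abs_div, abs_of_pos h0, div_le_iff₀ h0]
    calc |Δ α + γ / 2 * α| ≤ 6 * γ * α ^ 2 := this
      _ = 6 * γ * α * α := by ring
  · have : Tendsto (fun α : ℝ => 6 * γ * α) (nhds 0) (nhds (6 * γ * 0)) :=
      (continuous_const.mul continuous_id).tendsto 0
    simpa using this.mono_left nhdsWithin_le_nhds
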